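/- Let π ∈ S_n have pinnacle set P and vale set V, and let p be any pinnacle of π. Then restriction to P ∪ V commutes with the dual Foata–Strehl map at p: φ_p(π)|_{P∪V} = φ_p(π|_{P∪V}), where π|_{P∪V} denotes the subword of π consisting of the letters in P ∪ V (in the order they appear in π), and φ_p applied to a word is defined via the p-factorization of that word. -/

import Mathlib

/-- The extended one-line word of `w`, read 1-indexed, with the boundary
convention `π₀ = π_{n+1} = ∞`. -/
def ext (w : List ℕ) (i : ℕ) : ℕ∞ :=
  if 1 ≤ i ∧ i ≤ w.length then (w.getD (i - 1) 0 : ℕ∞) else ⊤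

/-- The pinnacle set of the word `w`: values `π_i` with `π_{i-1} < π_i > π_{i+1}`. -/
def pinnSet (w : List ℕ) : Finset ℕ :=
  ((Finset.Icc 1 w.length).filter fun i =>
      ext w (i - 1) < ext w i ∧ ext w (i + 1) < ext w i).image fun i => w.getD (i - 1) 0

/-- The vale set of the word `w`: values `π_i` with `π_{i-1} > π_i < π_{i+1}`. -/
def valeSet (w : List ℕ) : Finset ℕ :=
  ((Finset.Icc 1 w.length).filter fun i =>
      ext w i < ext w (i - 1) ∧ ext w i < ext w (i + 1)).image fun i => w.getD (i - 1) 0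

/-- `w` is the one-line notation of a permutation of `[n] = {1, …, n}`. -/
def IsPermOf (n : ℕ) (w : List ℕ) : Prop := w.Perm (List.range' 1 n)

/-- `w₁` in the `x`-factorization `w = w₁ w₂ x w₄ w₅`. -/
def fsW1 (x : ℕ) (w : List ℕ) : List ℕ :=
  ((w.take (w.idxOf x)).reverse.dropWhile fun a => decide (a < x)).reverse

/-- `w₂` in the `x`-factorization: the longest contiguous subword immediately to the
left of `x` all of whose letters are smaller than `x`. -/
def fsW2 (x : ℕ) (w : List ℕ) : List ℕ :=
  ((w.take (w.idxOf x)).reverse.takeWhile fun a => decide (a < x)).reverse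

/-- `w₄` in the `x`-factorization: the longest contiguous subword immediately to the
right of `x` all of whose letters are smaller than `x`. -/
def fsW4 (x : ℕ) (w : List ℕ) : List ℕ :=
  (w.drop (w.idxOf x + 1)).takeWhile fun a => decide (a < x)

/-- `w₅` in the `x`-factorization `w = w₁ w₂ x w₄ w₅`. -/
def fsW5 (x : ℕ) (w : List ℕ) : List ℕ :=
  (w.drop (w.idxOf x + 1)).dropWhile fun a => decide (a < x)

/-- The dual Foata–Strehl map `φ_x : w₁ w₂ x w₄ w₅ ↦ w₁ w₄ x w₂ w₅`. -/
def dualFS (x : ℕ) (w : List ℕ) : List ℕ :=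
  if x ∈ w then fsW1 x w ++ fsW4 x w ++ [x] ++ fsW2 x w ++ fsW5 x w else w

/-- The dual Foata–Strehl map `φ_S` for a set `S`, i.e. the composition of the
(commuting) maps `φ_x` over `x ∈ S`. -/
noncomputable def dualFSFinset (S : Finset ℕ) (w : List ℕ) : List ℕ :=
  S.toList.foldr dualFS w

/-- The largest letter of a word, with `wmax [] = 0`. -/
def wmax (w : List ℕ) : ℕ := w.foldr max 0

/-- The subword of `w` consisting of the letters lying in `A`. -/
def restrictTo (w : List ℕ) (A : Finset ℕ) : List ℕ :=
  w.filter fun a => decide (a ∈ A)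

/-- `N_{PV}(k) = |V_k| - |P_k|` (natural subtraction). -/
def nPV (P V : Finset ℕ) (k : ℕ) : ℕ :=
  (V.filter fun v => v < k).card - (P.filter fun p => p < k).card

/-- `N_{PV}(k) = |V_k| - |P_k|` as an integer. -/
def nPVZ (P V : Finset ℕ) (k : ℕ) : ℤ :=
  ((V.filter fun v => v < k).card : ℤ) - ((P.filter fun p => p < k).card : ℤ)

/-- `(P, V)` is admissible: some permutation of `[n]` has pinnacle set `P` and
vale set `V`. -/
def AdmissiblePair (n : ℕ) (P V : Finset ℕ) : Prop :=
  ∃ w : List ℕ, IsPermOf n w ∧ pinnSet w = P ∧ valeSet w = V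

open Classical in
/-- `𝒱(P)`: the collection of all vale sets `V` for which `(P, V)` is admissible. -/
noncomputable def valeSetsOf (n : ℕ) (P : Finset ℕ) : Finset (Finset ℕ) :=
  ((Finset.Icc 1 n).powerset).filter fun V => AdmissiblePair n P V

/-- `w` is FS-minimal: it has no double descents (with the `∞` boundary convention),
and for each pinnacle `p`, the `p`-factorization of the restriction of `w` to its
pinnacles and vales satisfies `max w₂ < max w₄`. -/
def FSMinimal (w : List ℕ) : Prop :=
  (∀ i ∈ Finset.Icc 1 w.length,
      ¬(ext w i < ext w (i - 1) ∧ ext w (i + 1) < ext w i)) ∧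
  ∀ p ∈ pinnSet w,
    wmax (fsW2 p (restrictTo w (pinnSet w ∪ valeSet w))) <
      wmax (fsW4 p (restrictTo w (pinnSet w ∪ valeSet w)))

/-- A `PV`-arrangement: a word listing each element of `P ∪ V` exactly once,
with pinnacle set `P` and vale set `V`. -/
def IsPVArrangement (P V : Finset ℕ) (α : List ℕ) : Prop :=
  α.Nodup ∧ α.toFinset = P ∪ V ∧ pinnSet α = P ∧ valeSet α = V

/-- A word is canonical (for pinnacle set `P`) if for each `p ∈ P` its
`p`-factorization satisfies `max w₂ < max w₄`. -/
def IsCanonical (P : Finset ℕ) (α : List ℕ) : Prop :=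
  ∀ p ∈ P, wmax (fsW2 p α) < wmax (fsW4 p α)

/-- The number of descents of `w`: indices `j ∈ [n-1]` with `π_j > π_{j+1}`. -/
def descentCount (w : List ℕ) : ℕ :=
  ((Finset.Icc 1 (w.length - 1)).filter fun j => w.getD j 0 < w.getD (j - 1) 0).card

/-- The original Foata–Strehl map `φ'_x`, defined like `φ_x` but with the words
`w₂, w₄` consisting of letters GREATER than `x`. -/
def origFS (x : ℕ) (w : List ℕ) : List ℕ :=
  if x ∈ w then
    ((w.take (w.idxOf x)).reverse.dropWhile fun a => decide (x < a)).reverse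
      ++ ((w.drop (w.idxOf x + 1)).takeWhile fun a => decide (x < a)) ++ [x]
      ++ ((w.take (w.idxOf x)).reverse.takeWhile fun a => decide (x < a)).reverse
      ++ ((w.drop (w.idxOf x + 1)).dropWhile fun a => decide (x < a))
  else w

/-- `C(l)`: weak compositions `(t₁, …, t_l)` of `l` with `t₁ + ⋯ + t_k ≥ k` for all `k`. -/
def weakComps (l : ℕ) : Finset (Fin l → ℕ) :=
  (Fintype.piFinset fun _ : Fin l => Finset.range (l + 1)).filter fun t =>
    (∑ i, t i) = l ∧ ∀ k : Fin l, (k : ℕ) + 1 ≤ ∑ i ∈ Finset.univ.filter (fun j => j ≤ k), t i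

/-- `g_{i+1} = |G_{i+1}|`, the size of the `(i+1)`-st gap set
`G_{i+1} = {j ∈ [n] \ P : p_i < j < p_{i+1}}` (0-indexed `i`, with `p₀ = 1`). -/
def gapCard (n : ℕ) (P : Finset ℕ) (i : ℕ) : ℕ :=
  (((Finset.Icc 1 n) \ P).filter fun j =>
      (if i = 0 then 1 else (P.sort (· ≤ ·)).getD (i - 1) 0) < j ∧
        j < (P.sort (· ≤ ·)).getD i 0).card
section Helpers

open List

lemma exists_max_list (l : List ℕ) (h : l ≠ []) : ∃ M ∈ l, ∀ x ∈ l, x ≤ M := by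
  induction l with
  | nil => exact absurd rfl h
  | cons a t ih =>
    rcases eq_or_ne t [] with rfl | ht
    · exact ⟨a, by simp, by simp⟩
    · obtain ⟨M, hM, hall⟩ := ih ht
      refine ⟨max a M, ?_, ?_⟩
      · rcases max_cases a M with ⟨he, _⟩ | ⟨he, _⟩
        · simp [he]
        · simp [he, hM]
      · intro x hx
        rcases List.mem_cons.1 hx with rfl | hx
        · exact le_max_left _ _
        · exact le_trans (hall x hx) (le_max_right _ _)

lemma takeWhile_append_all {q : ℕ → Bool} {l1 l2 : List ℕ} (h : ∀ x ∈ l1, q x) :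
    List.takeWhile q (l1 ++ l2) = l1 ++ List.takeWhile q l2 := by
  induction l1 with
  | nil => simp
  | cons a t ih =>
    rw [List.cons_append, List.takeWhile_cons, if_pos (h a (by simp)),
      ih (fun x hx => h x (by simp [hx]))]
    rfl

lemma dropWhile_append_all {q : ℕ → Bool} {l1 l2 : List ℕ} (h : ∀ x ∈ l1, q x) :
    List.dropWhile q (l1 ++ l2) = List.dropWhile q l2 := by
  induction l1 with
  | nil => simp
  | cons a t ih =>
    rw [List.cons_append, List.dropWhile_cons, if_pos (h a (by simp)),
      ih (fun x hx => h x (by simp [hx]))]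

lemma head?_dropWhile_false {q : ℕ → Bool} {l : List ℕ} {y : ℕ}
    (h : (List.dropWhile q l).head? = some y) : q y = false := by
  induction l with
  | nil => simp at h
  | cons a t ih =>
    by_cases hq : q a
    · rw [List.dropWhile_cons, if_pos hq] at h; exact ih h
    · rw [List.dropWhile_cons, if_neg hq] at h
      simp only [List.head?_cons, Option.some.injEq] at h
      subst h
      simpa using hq

lemma indexOf_append_cons {x : ℕ} {l r : List ℕ} (h : x ∉ l) :
    (l ++ x :: r).idxOf x = l.length := by
  induction l with
  | nil => simp
  | cons a t ih =>
    have ha : a ≠ x := by rintro rfl; exact h List.mem_cons_self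
    have ht : x ∉ t := fun hx => h (List.mem_cons_of_mem _ hx)
    rw [List.cons_append, List.idxOf_cons_ne _ ha, ih ht]
    simp

lemma filter_head_split {q : ℕ → Bool} {l : List ℕ} {z : ℕ}
    (h : (l.filter q).head? = some z) : ∃ u v, l = u ++ z :: v ∧ u.filter q = [] := by
  induction l with
  | nil => simp at h
  | cons a t ih =>
    by_cases hq : q a
    · rw [List.filter_cons, if_pos hq] at h
      simp only [List.head?_cons, Option.some.injEq] at h
      subst h
      exact ⟨[], t, rfl, rfl⟩
    · rw [List.filter_cons, if_neg hq] at h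
      obtain ⟨u, v, rfl, hu⟩ := ih h
      exact ⟨a :: u, v, rfl, by rw [List.filter_cons, if_neg hq, hu]⟩

lemma filter_last_split {q : ℕ → Bool} {l : List ℕ} {z : ℕ}
    (h : (l.filter q).getLast? = some z) : ∃ u v, l = u ++ z :: v ∧ v.filter q = [] := by
  have h' : (l.reverse.filter q).head? = some z := by
    rw [List.filter_reverse, List.head?_reverse]; exact h
  obtain ⟨u, v, hl, hu⟩ := filter_head_split h'
  refine ⟨v.reverse, u.reverse, ?_, ?_⟩
  · have h2 := congrArg List.reverse hl
    simpa [List.reverse_append] using h2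
  · rw [List.filter_reverse, hu, List.reverse_nil]

lemma getLast?_some_of_ne_nil {l : List ℕ} (h : l ≠ []) : ∃ y, l.getLast? = some y :=
  ⟨l.getLast h, List.getLast?_eq_getLast h⟩

lemma mem_of_getLast?' {l : List ℕ} {y : ℕ} (h : l.getLast? = some y) : y ∈ l := by
  obtain ⟨l₀, rfl⟩ := List.getLast?_eq_some_iff.1 h
  simp

lemma mem_of_head?' {l : List ℕ} {y : ℕ} (h : l.head? = some y) : y ∈ l := by
  obtain ⟨l₀, rfl⟩ := List.head?_eq_some_iff.1 h
  simp

end Helpers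
lemma mem_pinnSet_of_split {w l r : List ℕ} {x y z : ℕ}
    (hw : w = l ++ x :: r) (hy : l.getLast? = some y) (hz : r.head? = some z)
    (hyx : y < x) (hzx : z < x) : x ∈ pinnSet w := by
  obtain ⟨l₀, hl⟩ := List.getLast?_eq_some_iff.1 hy
  obtain ⟨r₀, hr⟩ := List.head?_eq_some_iff.1 hz
  subst hl hr hw
  have hlen : ((l₀ ++ [y]) ++ x :: z :: r₀).length = l₀.length + r₀.length + 3 := by
    simp [List.length_append]; try omega
  have e2 : ((l₀ ++ [y]) ++ x :: z :: r₀).getD (l₀.length + 1) 0 = x := by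
    rw [List.getD_append_right _ _ _ _ (by simp : (l₀ ++ [y]).length ≤ l₀.length + 1),
      show l₀.length + 1 - (l₀ ++ [y]).length = 0 by simp]
    rfl
  have e1 : ((l₀ ++ [y]) ++ x :: z :: r₀).getD l₀.length 0 = y := by
    rw [List.getD_append _ _ _ _ (by simp : l₀.length < (l₀ ++ [y]).length),
      List.getD_append_right _ _ _ _ (le_refl l₀.length),
      show l₀.length - l₀.length = 0 by omega]
    rfl
  have e3 : ((l₀ ++ [y]) ++ x :: z :: r₀).getD (l₀.length + 2) 0 = z := by
    rw [List.getD_append_right _ _ _ _ (by simp : (l₀ ++ [y]).length ≤ l₀.length + 2),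
      show l₀.length + 2 - (l₀ ++ [y]).length = 1 by simp]
    rfl
  have E2 : ext ((l₀ ++ [y]) ++ x :: z :: r₀) (l₀.length + 2) = (x : ℕ∞) := by
    rw [ext, if_pos ⟨by omega, by rw [hlen]; omega⟩,
      show l₀.length + 2 - 1 = l₀.length + 1 by omega, e2]
  have E1 : ext ((l₀ ++ [y]) ++ x :: z :: r₀) (l₀.length + 1) = (y : ℕ∞) := by
    rw [ext, if_pos ⟨by omega, by rw [hlen]; omega⟩,
      show l₀.length + 1 - 1 = l₀.length by omega, e1]
  have E3 : ext ((l₀ ++ [y]) ++ x :: z :: r₀) (l₀.length + 3) = (z : ℕ∞) := by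
    rw [ext, if_pos ⟨by omega, by rw [hlen]; omega⟩,
      show l₀.length + 3 - 1 = l₀.length + 2 by omega, e3]
  rw [pinnSet, Finset.mem_image]
  refine ⟨l₀.length + 2, ?_, ?_⟩
  · rw [Finset.mem_filter, Finset.mem_Icc]
    refine ⟨⟨by omega, by rw [hlen]; omega⟩, ?_, ?_⟩
    · rw [show l₀.length + 2 - 1 = l₀.length + 1 by omega, E1, E2]
      exact_mod_cast hyx
    · rw [show l₀.length + 2 + 1 = l₀.length + 3 by omega, E2, E3]
      exact_mod_cast hzx
  · rw [show l₀.length + 2 - 1 = l₀.length + 1 by omega, e2]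

lemma mem_of_mem_pinnSet {w : List ℕ} {x : ℕ} (h : x ∈ pinnSet w) : x ∈ w := by
  rw [pinnSet, Finset.mem_image] at h
  obtain ⟨i, hi, rfl⟩ := h
  rw [Finset.mem_filter, Finset.mem_Icc] at hi
  have h1 : i - 1 < w.length := by omega
  rw [List.getD_eq_getElem _ _ h1]
  exact List.getElem_mem _
lemma fs_decomp (x : ℕ) (w : List ℕ) (hx : x ∈ w) :
    w = (fsW1 x w ++ fsW2 x w) ++ x :: (fsW4 x w ++ fsW5 x w) := by
  have hk : w.idxOf x < w.length := List.idxOf_lt_length_iff.2 hx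
  have h12 : fsW1 x w ++ fsW2 x w = w.take (w.idxOf x) := by
    rw [fsW1, fsW2, ← List.reverse_append, List.takeWhile_append_dropWhile,
      List.reverse_reverse]
  have h45 : fsW4 x w ++ fsW5 x w = w.drop (w.idxOf x + 1) := by
    rw [fsW4, fsW5, List.takeWhile_append_dropWhile]
  rw [h12, h45]
  nth_rewrite 1 [← List.take_append_drop (w.idxOf x) w]
  rw [List.drop_eq_getElem_cons hk, List.getElem_idxOf hk]

lemma mem_fsW2_lt {x : ℕ} {w : List ℕ} {y : ℕ} (h : y ∈ fsW2 x w) : y < x := by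
  rw [fsW2, List.mem_reverse] at h
  simpa using List.mem_takeWhile_imp h

lemma mem_fsW4_lt {x : ℕ} {w : List ℕ} {y : ℕ} (h : y ∈ fsW4 x w) : y < x := by
  rw [fsW4] at h
  simpa using List.mem_takeWhile_imp h

lemma fsW1_getLast {x : ℕ} {w : List ℕ} {y : ℕ} (h : (fsW1 x w).getLast? = some y) :
    ¬ y < x := by
  rw [fsW1, List.getLast?_reverse] at h
  simpa using head?_dropWhile_false h

lemma fsW5_head {x : ℕ} {w : List ℕ} {y : ℕ} (h : (fsW5 x w).head? = some y) :
    ¬ y < x := by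
  rw [fsW5] at h
  simpa using head?_dropWhile_false h

lemma fs_eq_of (x : ℕ) (a b c d : List ℕ)
    (hxa : x ∉ a) (hxb : x ∉ b)
    (hb : ∀ y ∈ b, y < x) (hc : ∀ y ∈ c, y < x)
    (ha : ∀ y, a.getLast? = some y → x < y) (hd : ∀ y, d.head? = some y → x < y) :
    fsW1 x ((a ++ b) ++ x :: (c ++ d)) = a ∧
    fsW2 x ((a ++ b) ++ x :: (c ++ d)) = b ∧
    fsW4 x ((a ++ b) ++ x :: (c ++ d)) = c ∧
    fsW5 x ((a ++ b) ++ x :: (c ++ d)) = d := by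
  have hxab : x ∉ a ++ b := by simp [hxa, hxb]
  have hidx : ((a ++ b) ++ x :: (c ++ d)).idxOf x = (a ++ b).length :=
    indexOf_append_cons hxab
  have htake : ((a ++ b) ++ x :: (c ++ d)).take (a ++ b).length = a ++ b :=
    List.take_left
  have hdrop : ((a ++ b) ++ x :: (c ++ d)).drop ((a ++ b).length + 1) = c ++ d := by
    rw [show (a ++ b) ++ x :: (c ++ d) = ((a ++ b) ++ [x]) ++ (c ++ d) by simp,
      show (a ++ b).length + 1 = ((a ++ b) ++ [x]).length by simp; omega]
    exact List.drop_left
  have hbrev : ∀ t ∈ b.reverse, (fun s => decide (s < x)) t = true := by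
    intro t ht
    simpa using hb t (List.mem_reverse.1 ht)
  have hQa1 : List.takeWhile (fun s => decide (s < x)) a.reverse = [] := by
    rcases eq_or_ne a [] with rfl | hane
    · simp
    · obtain ⟨y, hy⟩ := getLast?_some_of_ne_nil hane
      have hxy : ¬ y < x := not_lt.2 (ha y hy).le
      obtain ⟨a₀, rfl⟩ := List.getLast?_eq_some_iff.1 hy
      rw [List.reverse_append, List.reverse_singleton, List.singleton_append,
        List.takeWhile_cons, if_neg (by simpa using hxy)]
  have hQa2 : List.dropWhile (fun s => decide (s < x)) a.reverse = a.reverse := by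
    rcases eq_or_ne a [] with rfl | hane
    · simp
    · obtain ⟨y, hy⟩ := getLast?_some_of_ne_nil hane
      have hxy : ¬ y < x := not_lt.2 (ha y hy).le
      obtain ⟨a₀, rfl⟩ := List.getLast?_eq_some_iff.1 hy
      rw [List.reverse_append, List.reverse_singleton, List.singleton_append,
        List.dropWhile_cons, if_neg (by simpa using hxy)]
  have hcall : ∀ t ∈ c, (fun s => decide (s < x)) t = true := by
    intro t ht; simpa using hc t ht
  have hQd1 : List.takeWhile (fun s => decide (s < x)) d = [] := by
    rcases d with _ | ⟨y, d'⟩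
    · simp
    · have hxy : ¬ y < x := not_lt.2 (hd y rfl).le
      rw [List.takeWhile_cons, if_neg (by simpa using hxy)]
  have hQd2 : List.dropWhile (fun s => decide (s < x)) d = d := by
    rcases d with _ | ⟨y, d'⟩
    · simp
    · have hxy : ¬ y < x := not_lt.2 (hd y rfl).le
      rw [List.dropWhile_cons, if_neg (by simpa using hxy)]
  refine ⟨?_, ?_, ?_, ?_⟩
  · rw [fsW1, hidx, htake, List.reverse_append, dropWhile_append_all hbrev, hQa2,
      List.reverse_reverse]
  · rw [fsW2, hidx, htake, List.reverse_append, takeWhile_append_all hbrev, hQa1,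
      List.append_nil, List.reverse_reverse]
  · rw [fsW4, hidx, hdrop, takeWhile_append_all hcall, hQd1, List.append_nil]
  · rw [fsW5, hidx, hdrop, dropWhile_append_all hcall, hQd2]
lemma lastFilter_gt (S : Finset ℕ) (a rest : List ℕ) (p z : ℕ)
    (hnd : (a ++ rest).Nodup)
    (hpinn : pinnSet (a ++ rest) ⊆ S)
    (hlasta : ∀ y, a.getLast? = some y → p < y)
    (hrest : ∃ z', rest.head? = some z' ∧ z' ≤ p)
    (hz : (a.filter fun t => decide (t ∈ S)).getLast? = some z) :
    p < z := by
  by_contra hzp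
  push_neg at hzp
  obtain ⟨u, v, hav, hv⟩ := filter_last_split hz
  have hvS : ∀ x ∈ v, x ∉ S := by
    intro x hx hxS
    have := List.filter_eq_nil_iff.1 hv x hx
    simp [hxS] at this
  rcases eq_or_ne v [] with rfl | hvne
  · have hlz : a.getLast? = some z := by
      rw [hav]
      exact List.getLast?_concat (l := u)
    exact absurd (hlasta z hlz) (not_lt.2 hzp)
  · obtain ⟨M, hMv, hMax⟩ := exists_max_list v hvne
    obtain ⟨y, hy⟩ := getLast?_some_of_ne_nil hvne
    have hay : a.getLast? = some y := by
      rw [hav, show u ++ z :: v = (u ++ [z]) ++ v by simp, List.getLast?_append, hy]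
      rfl
    have hpy : p < y := hlasta y hay
    have hyM : y ≤ M := hMax y (mem_of_getLast?' hy)
    have hpM : p < M := lt_of_lt_of_le hpy hyM
    obtain ⟨s, t, hst⟩ := List.append_of_mem hMv
    have hndv : (s ++ M :: t).Nodup := by
      rw [← hst]
      refine List.Sublist.nodup ?_ hnd
      refine List.Sublist.trans ?_ (List.sublist_append_left a rest)
      rw [hav]
      exact List.Sublist.trans (List.sublist_cons_self z v) (List.sublist_append_right u _)
    have hMs : M ∉ s := by
      rw [List.nodup_append] at hndv
      exact fun h => hndv.2.2 M h M List.mem_cons_self rfl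
    have hMt : M ∉ t := by
      rw [List.nodup_append] at hndv
      exact (List.nodup_cons.1 hndv.2.1).1
    have hslt : ∀ x ∈ s, x < M := fun x hx =>
      lt_of_le_of_ne (hMax x (by rw [hst]; simp [hx]))
        (fun he => hMs (he ▸ hx))
    have htlt : ∀ x ∈ t, x < M := fun x hx =>
      lt_of_le_of_ne (hMax x (by rw [hst]; simp [hx]))
        (fun he => hMt (he ▸ hx))
    obtain ⟨z', hz', hz'p⟩ := hrest
    have hre : a ++ rest = (u ++ z :: s) ++ M :: (t ++ rest) := by
      rw [hav, hst]; simp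
    have hL : ∃ yL, (u ++ z :: s).getLast? = some yL ∧ yL < M := by
      rcases eq_or_ne s [] with rfl | hs
      · refine ⟨z, ?_, lt_of_le_of_lt hzp hpM⟩
        rw [show u ++ z :: ([] : List ℕ) = u ++ [z] by simp]
        exact List.getLast?_concat (l := u)
      · obtain ⟨yL, hyL⟩ := getLast?_some_of_ne_nil hs
        refine ⟨yL, ?_, hslt yL (mem_of_getLast?' hyL)⟩
        rw [show u ++ z :: s = (u ++ [z]) ++ s by simp, List.getLast?_append, hyL]
        rfl
    have hR : ∃ zR, (t ++ rest).head? = some zR ∧ zR < M := by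
      rcases t with _ | ⟨bb, t'⟩
      · exact ⟨z', by simpa using hz', lt_of_le_of_lt hz'p hpM⟩
      · exact ⟨bb, rfl, htlt bb (by simp)⟩
    obtain ⟨yL, h1, h2⟩ := hL
    obtain ⟨zR, h3, h4⟩ := hR
    have hMpin : M ∈ pinnSet (a ++ rest) :=
      mem_pinnSet_of_split hre h1 h3 h2 h4
    exact hvS M hMv (hpinn hMpin)

lemma headFilter_gt (S : Finset ℕ) (pre d : List ℕ) (p z : ℕ)
    (hnd : (pre ++ d).Nodup)
    (hpinn : pinnSet (pre ++ d) ⊆ S)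
    (hheadd : ∀ y, d.head? = some y → p < y)
    (hpre : ∃ z', pre.getLast? = some z' ∧ z' ≤ p)
    (hz : (d.filter fun t => decide (t ∈ S)).head? = some z) :
    p < z := by
  by_contra hzp
  push_neg at hzp
  obtain ⟨u, v, hduv, hu⟩ := filter_head_split hz
  have huS : ∀ x ∈ u, x ∉ S := by
    intro x hx hxS
    have := List.filter_eq_nil_iff.1 hu x hx
    simp [hxS] at this
  rcases eq_or_ne u [] with rfl | hune
  · have hdz : d.head? = some z := by rw [hduv]; rfl
    exact absurd (hheadd z hdz) (not_lt.2 hzp)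
  · obtain ⟨M, hMu, hMax⟩ := exists_max_list u hune
    obtain ⟨y, hy⟩ := (by
      rcases u with _ | ⟨b, t⟩
      · exact absurd rfl hune
      · exact ⟨b, rfl⟩ : ∃ y, u.head? = some y)
    have hdy : d.head? = some y := by
      rw [hduv, List.head?_append, hy]; rfl
    have hpy : p < y := hheadd y hdy
    have hyM : y ≤ M := hMax y (mem_of_head?' hy)
    have hpM : p < M := lt_of_lt_of_le hpy hyM
    obtain ⟨s, t, hst⟩ := List.append_of_mem hMu
    have hndu : (s ++ M :: t).Nodup := by
      rw [← hst]
      refine List.Sublist.nodup ?_ hnd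
      refine List.Sublist.trans ?_ (List.sublist_append_right pre d)
      rw [hduv]
      exact List.sublist_append_left u _
    have hMs : M ∉ s := by
      rw [List.nodup_append] at hndu
      exact fun h => hndu.2.2 M h M List.mem_cons_self rfl
    have hMt : M ∉ t := by
      rw [List.nodup_append] at hndu
      exact (List.nodup_cons.1 hndu.2.1).1
    have hslt : ∀ x ∈ s, x < M := fun x hx =>
      lt_of_le_of_ne (hMax x (by rw [hst]; simp [hx]))
        (fun he => hMs (he ▸ hx))
    have htlt : ∀ x ∈ t, x < M := fun x hx =>
      lt_of_le_of_ne (hMax x (by rw [hst]; simp [hx]))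
        (fun he => hMt (he ▸ hx))
    obtain ⟨z', hz', hz'p⟩ := hpre
    have hre : pre ++ d = (pre ++ s) ++ M :: (t ++ z :: v) := by
      rw [hduv, hst]; simp
    have hL : ∃ yL, (pre ++ s).getLast? = some yL ∧ yL < M := by
      rcases eq_or_ne s [] with rfl | hs
      · exact ⟨z', by simpa using hz', lt_of_le_of_lt hz'p hpM⟩
      · obtain ⟨yL, hyL⟩ := getLast?_some_of_ne_nil hs
        refine ⟨yL, ?_, hslt yL (mem_of_getLast?' hyL)⟩
        rw [List.getLast?_append, hyL]
        rfl
    have hR : ∃ zR, (t ++ z :: v).head? = some zR ∧ zR < M := by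
      rcases t with _ | ⟨bb, t'⟩
      · exact ⟨z, rfl, lt_of_le_of_lt hzp hpM⟩
      · exact ⟨bb, rfl, htlt bb (by simp)⟩
    obtain ⟨yL, h1, h2⟩ := hL
    obtain ⟨zR, h3, h4⟩ := hR
    have hMpin : M ∈ pinnSet (pre ++ d) :=
      mem_pinnSet_of_split hre h1 h3 h2 h4
    exact huS M hMu (hpinn hMpin)
lemma head?_some_of_ne_nil {l : List ℕ} (h : l ≠ []) : ∃ y, l.head? = some y := by
  rcases l with _ | ⟨b, t⟩
  · exact absurd rfl h
  · exact ⟨b, rfl⟩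

/-- Lemma 3.4: restriction to `P ∪ V` commutes with the dual
Foata–Strehl map at a pinnacle `p`: `φ_p(π)|_{P∪V} = φ_p(π|_{P∪V})`. -/
theorem restrictTo_dualFS (n : ℕ) (π : List ℕ) (hπ : IsPermOf n π)
    (p : ℕ) (hp : p ∈ pinnSet π) :
    restrictTo (dualFS p π) (pinnSet π ∪ valeSet π) =
      dualFS p (restrictTo π (pinnSet π ∪ valeSet π)) := by
  have hpπ : p ∈ π := mem_of_mem_pinnSet hp
  have hnd : π.Nodup := hπ.nodup_iff.2 List.nodup_range'
  have hpS : p ∈ pinnSet π ∪ valeSet π := Finset.mem_union_left _ hp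
  simp only [restrictTo, dualFS]
  set S := pinnSet π ∪ valeSet π with hSdef
  set F : ℕ → Bool := fun t => decide (t ∈ S) with hFdef
  have hfp : F p = true := by simp [hFdef, hpS]
  have hpm : p ∈ List.filter F π := List.mem_filter.2 ⟨hpπ, hfp⟩
  rw [if_pos hpπ]
  simp only [show p ∈ List.filter (fun a => decide (a ∈ S)) π from hpm, ↓reduceIte]
  have hdec : π = (fsW1 p π ++ fsW2 p π) ++ p :: (fsW4 p π ++ fsW5 p π) :=
    fs_decomp p π hpπ
  have hndfull : ((fsW1 p π ++ fsW2 p π) ++ p :: (fsW4 p π ++ fsW5 p π)).Nodup := by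
    rw [← hdec]; exact hnd
  have hnd2 := List.nodup_append.1 hndfull
  have hpab : p ∉ fsW1 p π ++ fsW2 p π := fun h => hnd2.2.2 p h p List.mem_cons_self rfl
  have hpcd : p ∉ fsW4 p π ++ fsW5 p π := (List.nodup_cons.1 hnd2.2.1).1
  have hpa : p ∉ fsW1 p π := fun h => hpab (List.mem_append_left _ h)
  have hpb : p ∉ fsW2 p π := fun h => hpab (List.mem_append_right _ h)
  have hpd : p ∉ fsW5 p π := fun h => hpcd (List.mem_append_right _ h)
  have hb : ∀ y ∈ fsW2 p π, y < p := fun y hy => mem_fsW2_lt hy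
  have hc : ∀ y ∈ fsW4 p π, y < p := fun y hy => mem_fsW4_lt hy
  have ha : ∀ y, (fsW1 p π).getLast? = some y → p < y := by
    intro y hy
    have h1 := fsW1_getLast hy
    have h2 : y ≠ p := by
      intro he
      subst he
      exact hpa (mem_of_getLast?' hy)
    omega
  have hd : ∀ y, (fsW5 p π).head? = some y → p < y := by
    intro y hy
    have h1 := fsW5_head hy
    have h2 : y ≠ p := by
      intro he
      subst he
      exact hpd (mem_of_head?' hy)
    omega
  have hpinn : pinnSet π ⊆ S := by rw [hSdef]; exact Finset.subset_union_left
  have ha' : ∀ y, ((fsW1 p π).filter F).getLast? = some y → p < y := by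
    intro y hy
    rw [hFdef] at hy
    refine lastFilter_gt S (fsW1 p π) (fsW2 p π ++ p :: (fsW4 p π ++ fsW5 p π)) p y
      ?_ ?_ ha ?_ hy
    · rw [show fsW1 p π ++ (fsW2 p π ++ p :: (fsW4 p π ++ fsW5 p π)) =
        (fsW1 p π ++ fsW2 p π) ++ p :: (fsW4 p π ++ fsW5 p π) by simp, ← hdec]
      exact hnd
    · rw [show fsW1 p π ++ (fsW2 p π ++ p :: (fsW4 p π ++ fsW5 p π)) =
        (fsW1 p π ++ fsW2 p π) ++ p :: (fsW4 p π ++ fsW5 p π) by simp, ← hdec]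
      exact hpinn
    · rcases eq_or_ne (fsW2 p π) [] with hb2 | hb2
      · exact ⟨p, by rw [hb2]; rfl, le_refl p⟩
      · obtain ⟨yb, hyb⟩ := head?_some_of_ne_nil hb2
        refine ⟨yb, ?_, (hb yb (mem_of_head?' hyb)).le⟩
        rw [List.head?_append, hyb]
        rfl
  have hd' : ∀ y, ((fsW5 p π).filter F).head? = some y → p < y := by
    intro y hy
    rw [hFdef] at hy
    refine headFilter_gt S ((fsW1 p π ++ fsW2 p π) ++ p :: fsW4 p π) (fsW5 p π) p y
      ?_ ?_ hd ?_ hy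
    · rw [show ((fsW1 p π ++ fsW2 p π) ++ p :: fsW4 p π) ++ fsW5 p π =
        (fsW1 p π ++ fsW2 p π) ++ p :: (fsW4 p π ++ fsW5 p π) by simp, ← hdec]
      exact hnd
    · rw [show ((fsW1 p π ++ fsW2 p π) ++ p :: fsW4 p π) ++ fsW5 p π =
        (fsW1 p π ++ fsW2 p π) ++ p :: (fsW4 p π ++ fsW5 p π) by simp, ← hdec]
      exact hpinn
    · rcases eq_or_ne (fsW4 p π) [] with hc2 | hc2
      · refine ⟨p, ?_, le_refl p⟩
        rw [hc2, show (fsW1 p π ++ fsW2 p π) ++ p :: ([] : List ℕ) =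
          (fsW1 p π ++ fsW2 p π) ++ [p] by simp]
        exact List.getLast?_concat
      · obtain ⟨yc, hyc⟩ := getLast?_some_of_ne_nil hc2
        refine ⟨yc, ?_, (hc yc (mem_of_getLast?' hyc)).le⟩
        rw [show (fsW1 p π ++ fsW2 p π) ++ p :: fsW4 p π =
          ((fsW1 p π ++ fsW2 p π) ++ [p]) ++ fsW4 p π by simp,
          List.getLast?_append, hyc]
        rfl
  have hsplit : π.filter F =
      ((fsW1 p π).filter F ++ (fsW2 p π).filter F) ++
        p :: ((fsW4 p π).filter F ++ (fsW5 p π).filter F) := by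
    conv_lhs => rw [hdec]
    simp only [List.filter_append, List.filter_cons]
    rw [if_pos hfp]
  obtain ⟨e1, e2, e3, e4⟩ := fs_eq_of p ((fsW1 p π).filter F) ((fsW2 p π).filter F)
    ((fsW4 p π).filter F) ((fsW5 p π).filter F)
    (fun h => hpa (List.mem_of_mem_filter h)) (fun h => hpb (List.mem_of_mem_filter h))
    (fun y hy => hb y (List.mem_of_mem_filter hy))
    (fun y hy => hc y (List.mem_of_mem_filter hy))
    ha' hd'
  rw [hsplit, e1, e2, e3, e4]
  simp [List.filter_append, List.filter_cons, hfp, hpS, hFdef]
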